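/- For integers ℓ > j ≥ 1 and integer α ≥ −1, the integral I(ℓ,j,α) = ∫_0^1 (1−v)^{2j−2} v^{2ℓ−2j+α} (ℓ(1−v) − j)² dv satisfies I(ℓ,j,α) ≤ [(2ℓ−2j+α)! (2j−2)! / (2ℓ+α+1)!] · jℓ · (2(ℓ−j+1) + α(3+α)). Moreover I(ℓ,0,α) = ℓ²/(2ℓ+α+1) ≤ ℓ/2. -/

import Mathlib

open Finset in
lemma prodFact (b : ℕ) : ∀ n : ℕ, b.factorial * ∏ j ∈ Finset.range n, (b + 1 + j) = (b + n).factorial := by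
  intro n
  induction n with
  | zero => simp
  | succ n ih =>
    rw [Finset.prod_range_succ, ← mul_assoc, ih]
    rw [show b + (n+1) = (b + n) + 1 by ring, Nat.factorial_succ]
    ring

lemma betaNat (a b : ℕ) :
    (∫ v in (0:ℝ)..1, (1 - v) ^ a * v ^ b)
      = (a.factorial : ℝ) * b.factorial / ((a + b + 1).factorial) := by
  have hu : 0 < Complex.re ((b : ℂ) + 1) := by
    simp only [Complex.add_re, Complex.natCast_re, Complex.one_re]
    positivity
  have h := Complex.betaIntegral_eval_nat_add_one_right hu a
  rw [Complex.betaIntegral] at h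
  simp only [add_sub_cancel_right, Complex.cpow_natCast] at h
  have hre : (∫ x in (0:ℝ)..1, (x:ℂ) ^ b * (1 - (x:ℂ)) ^ a)
      = ((∫ x in (0:ℝ)..1, x ^ b * (1 - x) ^ a : ℝ) : ℂ) := by
    rw [← intervalIntegral.integral_ofReal]
    congr 1
    ext x
    push_cast
    ring
  rw [hre] at h
  have hprod : (∏ j ∈ Finset.range (a+1), ((b:ℂ) + 1 + j)) * (b.factorial : ℂ)
      = ((b + (a+1)).factorial : ℂ) := by
    rw [mul_comm]
    exact_mod_cast prodFact b (a+1)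
  have hfacpos : (0:ℝ) < (b + (a+1)).factorial := by positivity
  have hbfpos : (0:ℝ) < b.factorial := by positivity
  have key : (∫ x in (0:ℝ)..1, x ^ b * (1 - x) ^ a)
      = (a.factorial : ℝ) * b.factorial / ((b + (a+1)).factorial) := by
    have := h
    rw [eq_div_iff] at this
    · have h2 : ((∫ x in (0:ℝ)..1, x ^ b * (1 - x) ^ a : ℝ) : ℂ) * ((b + (a+1)).factorial : ℂ)
          = (a.factorial : ℂ) * (b.factorial : ℂ) := by
        calc ((∫ x in (0:ℝ)..1, x ^ b * (1 - x) ^ a : ℝ) : ℂ) * ((b + (a+1)).factorial : ℂ)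
            = ((∫ x in (0:ℝ)..1, x ^ b * (1 - x) ^ a : ℝ) : ℂ)
              * ((∏ j ∈ Finset.range (a+1), ((b:ℂ) + 1 + j)) * (b.factorial : ℂ)) := by rw [hprod]
          _ = (((∫ x in (0:ℝ)..1, x ^ b * (1 - x) ^ a : ℝ) : ℂ)
              * (∏ j ∈ Finset.range (a+1), ((b:ℂ) + 1 + j))) * (b.factorial : ℂ) := by ring
          _ = (a.factorial : ℂ) * (b.factorial : ℂ) := by rw [this]
      have h3 : ((∫ x in (0:ℝ)..1, x ^ b * (1 - x) ^ a : ℝ) * ((b + (a+1)).factorial : ℝ) : ℝ)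
          = (a.factorial : ℝ) * (b.factorial : ℝ) := by
        exact_mod_cast h2
      field_simp at h3 ⊢
      linarith [h3]
    · intro hc
      have : (((b + (a+1)).factorial : ℕ) : ℂ) = 0 := by rw [← hprod]; rw [hc]; ring
      simp [Nat.factorial_ne_zero] at this
  rw [show a + b + 1 = b + (a+1) by ring]
  rw [← key]
  congr 1
  ext x
  ring




set_option maxHeartbeats 1000000 in
/-- Bound for the Beta-type integral
`I(ℓ,j,α) = ∫_0^1 (1−v)^{2j−2} v^{2ℓ−2j+α} (ℓ(1−v) − j)² dv`:
for `ℓ > j ≥ 1` and `α ≥ −1`,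
`I(ℓ,j,α) ≤ [(2ℓ−2j+α)!(2j−2)!/(2ℓ+α+1)!] jℓ (2(ℓ−j+1) + α(3+α))`;
moreover `I(ℓ,0,α) = ℓ²/(2ℓ+α+1) ≤ ℓ/2`. -/
theorem stmt9 (ℓ j : ℕ) (α : ℤ) (hj : 1 ≤ j) (hjℓ : j < ℓ) (hα : -1 ≤ α) :
    ((∫ v in (0:ℝ)..1, (1 - v) ^ (2 * (j : ℤ) - 2) * v ^ (2 * (ℓ : ℤ) - 2 * j + α)
        * ((ℓ : ℝ) * (1 - v) - (j : ℝ)) ^ 2)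
      ≤ ((2 * (ℓ : ℤ) - 2 * j + α).toNat.factorial : ℝ) * ((2 * j - 2).factorial : ℝ)
          / ((2 * (ℓ : ℤ) + α + 1).toNat.factorial : ℝ)
          * ((j : ℝ) * (ℓ : ℝ))
          * (2 * ((ℓ : ℝ) - (j : ℝ) + 1) + (α : ℝ) * (3 + (α : ℝ)))) ∧
    ((∫ v in (0:ℝ)..1, (1 - v) ^ (2 * (0 : ℤ) - 2) * v ^ (2 * (ℓ : ℤ) - 2 * 0 + α)
        * ((ℓ : ℝ) * (1 - v) - (0 : ℝ)) ^ 2)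
      = (ℓ : ℝ) ^ 2 / (2 * (ℓ : ℝ) + (α : ℝ) + 1)) ∧
    ((ℓ : ℝ) ^ 2 / (2 * (ℓ : ℝ) + (α : ℝ) + 1) ≤ (ℓ : ℝ) / 2) := by
  have hℓ2 : 2 ≤ ℓ := by omega
  have hJ1 : (1:ℝ) ≤ (j:ℝ) := by exact_mod_cast hj
  have hJL : (j:ℝ) + 1 ≤ (ℓ:ℝ) := by exact_mod_cast hjℓ
  have hAm1 : (-1:ℝ) ≤ (α:ℝ) := by exact_mod_cast hα
  have hL2 : (2:ℝ) ≤ (ℓ:ℝ) := by exact_mod_cast hℓ2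
  have hAA : 0 ≤ (α:ℝ) * ((α:ℝ) + 1) := by
    rcases le_or_gt 0 α with h | h
    · have h0 : (0:ℝ) ≤ (α:ℝ) := by exact_mod_cast h
      nlinarith
    · have : α = -1 := by omega
      subst this
      norm_num
  refine ⟨?_, ?_, ?_⟩
  · -- Part 1
    set a : ℕ := 2 * j - 2 with hadef
    set b : ℕ := (2 * (ℓ:ℤ) - 2 * j + α).toNat with hbdef
    have haZ : 2 * (j : ℤ) - 2 = (a : ℤ) := by omega
    have hbZ : 2 * (ℓ : ℤ) - 2 * j + α = (b : ℤ) := by omega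
    have hN : (2 * (ℓ:ℤ) + α + 1).toNat = a + b + 3 := by omega
    have haR : ((a:ℕ) : ℝ) = 2 * (j:ℝ) - 2 := by exact_mod_cast haZ.symm
    have hbR : ((b:ℕ) : ℝ) = 2 * (ℓ:ℝ) - 2 * (j:ℝ) + (α:ℝ) := by exact_mod_cast hbZ.symm
    have hint1 : (∫ v in (0:ℝ)..1, (1 - v) ^ (2 * (j : ℤ) - 2) * v ^ (2 * (ℓ : ℤ) - 2 * j + α)
          * ((ℓ : ℝ) * (1 - v) - (j : ℝ)) ^ 2)
        = ∫ v in (0:ℝ)..1, ((ℓ:ℝ)^2 * ((1 - v)^(a+2) * v^b)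
            - 2 * (j:ℝ) * (ℓ:ℝ) * ((1 - v)^(a+1) * v^b) + (j:ℝ)^2 * ((1 - v)^a * v^b)) := by
      congr 1
      ext v
      rw [haZ, hbZ, zpow_natCast, zpow_natCast]
      ring
    have cont : ∀ (c : ℝ) (m n : ℕ),
        IntervalIntegrable (fun v : ℝ => c * ((1 - v)^m * v^n)) MeasureTheory.volume 0 1 := by
      intro c m n
      exact (continuous_const.mul
        (((continuous_const.sub continuous_id).pow m).mul (continuous_id.pow n))).intervalIntegrable _ _
    have hsplit : (∫ v in (0:ℝ)..1, ((ℓ:ℝ)^2 * ((1 - v)^(a+2) * v^b)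
            - 2 * (j:ℝ) * (ℓ:ℝ) * ((1 - v)^(a+1) * v^b) + (j:ℝ)^2 * ((1 - v)^a * v^b)))
        = (ℓ:ℝ)^2 * (∫ v in (0:ℝ)..1, (1 - v)^(a+2) * v^b)
            - 2 * (j:ℝ) * (ℓ:ℝ) * (∫ v in (0:ℝ)..1, (1 - v)^(a+1) * v^b)
            + (j:ℝ)^2 * (∫ v in (0:ℝ)..1, (1 - v)^a * v^b) := by
      rw [intervalIntegral.integral_add ((cont _ _ _).sub (cont _ _ _)) (cont _ _ _),
        intervalIntegral.integral_sub (cont _ _ _) (cont _ _ _),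
        intervalIntegral.integral_const_mul, intervalIntegral.integral_const_mul,
        intervalIntegral.integral_const_mul]
    have B0 := betaNat a b
    have B1 : (∫ v in (0:ℝ)..1, (1 - v)^(a+1) * v^b)
        = ((a+1).factorial : ℝ) * b.factorial / ((a+b+2).factorial) := by
      have := betaNat (a+1) b
      rwa [show a + 1 + b + 1 = a + b + 2 by omega] at this
    have B2 : (∫ v in (0:ℝ)..1, (1 - v)^(a+2) * v^b)
        = ((a+2).factorial : ℝ) * b.factorial / ((a+b+3).factorial) := by
      have := betaNat (a+2) b
      rwa [show a + 2 + b + 1 = a + b + 3 by omega] at this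
    have hf1 : ((a+1).factorial : ℝ) = ((a:ℝ)+1) * a.factorial := by
      rw [Nat.factorial_succ]; push_cast; ring
    have hf2 : ((a+2).factorial : ℝ) = ((a:ℝ)+2) * (((a:ℝ)+1) * a.factorial) := by
      rw [show a+2 = (a+1)+1 by rfl, Nat.factorial_succ, Nat.factorial_succ]; push_cast; ring
    have hf3 : ((a+b+2).factorial : ℝ) = ((a:ℝ)+(b:ℝ)+2) * (a+b+1).factorial := by
      rw [show a+b+2 = (a+b+1)+1 by rfl, Nat.factorial_succ]; push_cast; ring
    have hf4 : ((a+b+3).factorial : ℝ)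
        = ((a:ℝ)+(b:ℝ)+3) * (((a:ℝ)+(b:ℝ)+2) * (a+b+1).factorial) := by
      rw [show a+b+3 = ((a+b+1)+1)+1 by rfl, Nat.factorial_succ, Nat.factorial_succ]
      push_cast; ring
    rw [hint1, hsplit, B0, B1, B2, hf1, hf2, hf3, hf4, hN]
    rw [show ((2 * j - 2 : ℕ).factorial : ℝ) = (a.factorial : ℝ) by rw [hadef]]
    rw [show (((a+b+3).factorial : ℕ) : ℝ)
        = ((a:ℝ)+(b:ℝ)+3) * (((a:ℝ)+(b:ℝ)+2) * (a+b+1).factorial) from hf4]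
    set FA := (a.factorial : ℝ) with hFA
    set FB := (b.factorial : ℝ) with hFB
    set F := ((a+b+1).factorial : ℝ) with hF
    have hFApos : 0 < FA := by rw [hFA]; positivity
    have hFBpos : 0 < FB := by rw [hFB]; positivity
    have hFpos : 0 < F := by rw [hF]; positivity
    have hA2 : (0:ℝ) < (a:ℝ) + (b:ℝ) + 2 := by positivity
    have hA3 : (0:ℝ) < (a:ℝ) + (b:ℝ) + 3 := by positivity
    set A := ((a:ℝ)) with hA
    set B := ((b:ℝ)) with hB
    have coefpos : 0 < FA * FB / ((A + B + 3) * ((A + B + 2) * F)) := by positivity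
    have lhs_eq : (ℓ:ℝ)^2 * ((A+2) * ((A+1) * FA) * FB / ((A+B+3) * ((A+B+2) * F)))
            - 2 * (j:ℝ) * (ℓ:ℝ) * ((A+1) * FA * FB / ((A+B+2) * F))
            + (j:ℝ)^2 * (FA * FB / F)
        = FA * FB / ((A + B + 3) * ((A + B + 2) * F))
          * ((ℓ:ℝ)^2 * (A+2) * (A+1) - 2*(j:ℝ)*(ℓ:ℝ)*(A+1)*(A+B+3)
              + (j:ℝ)^2 * (A+B+2) * (A+B+3)) := by
      field_simp
    rw [lhs_eq]
    have hE : (ℓ:ℝ)^2 * (A+2) * (A+1) - 2*(j:ℝ)*(ℓ:ℝ)*(A+1)*(A+B+3)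
              + (j:ℝ)^2 * (A+B+2) * (A+B+3)
        ≤ (j:ℝ) * (ℓ:ℝ) * (2 * ((ℓ:ℝ) - (j:ℝ) + 1) + (α:ℝ) * (3 + (α:ℝ))) := by
      rw [haR, hbR]
      have hid : (j:ℝ) * (ℓ:ℝ) * (2 * ((ℓ:ℝ) - (j:ℝ) + 1) + (α:ℝ) * (3 + (α:ℝ)))
          - ((ℓ:ℝ)^2 * ((2*(j:ℝ)-2)+2) * ((2*(j:ℝ)-2)+1)
            - 2*(j:ℝ)*(ℓ:ℝ)*((2*(j:ℝ)-2)+1)*((2*(j:ℝ)-2)+(2*(ℓ:ℝ)-2*(j:ℝ)+(α:ℝ))+3)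
            + (j:ℝ)^2 * ((2*(j:ℝ)-2)+(2*(ℓ:ℝ)-2*(j:ℝ)+(α:ℝ))+2)
              * ((2*(j:ℝ)-2)+(2*(ℓ:ℝ)-2*(j:ℝ)+(α:ℝ))+3))
          = (j:ℝ) * ((ℓ:ℝ) - (j:ℝ)) * ((α:ℝ) * ((α:ℝ) + 1)) := by ring
      nlinarith [hid, mul_nonneg (mul_nonneg (by linarith : (0:ℝ) ≤ (j:ℝ))
        (by linarith : (0:ℝ) ≤ (ℓ:ℝ) - (j:ℝ))) hAA]
    calc FA * FB / ((A + B + 3) * ((A + B + 2) * F))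
          * ((ℓ:ℝ)^2 * (A+2) * (A+1) - 2*(j:ℝ)*(ℓ:ℝ)*(A+1)*(A+B+3)
              + (j:ℝ)^2 * (A+B+2) * (A+B+3))
        ≤ FA * FB / ((A + B + 3) * ((A + B + 2) * F))
          * ((j:ℝ) * (ℓ:ℝ) * (2 * ((ℓ:ℝ) - (j:ℝ) + 1) + (α:ℝ) * (3 + (α:ℝ)))) :=
          mul_le_mul_of_nonneg_left hE coefpos.le
      _ = FB * FA / ((A + B + 3) * ((A + B + 2) * F)) * ((j:ℝ) * (ℓ:ℝ))
          * (2 * ((ℓ:ℝ) - (j:ℝ) + 1) + (α:ℝ) * (3 + (α:ℝ))) := by ring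
  · -- Part 2
    set n : ℕ := (2 * (ℓ:ℤ) + α).toNat with hndef
    have hnZ : 2 * (ℓ:ℤ) - 2 * 0 + α = (n : ℤ) := by omega
    have hne : ∀ᵐ x : ℝ, x ≠ 1 := by
      refine MeasureTheory.ae_iff.mpr ?_
      simp only [not_not, Set.setOf_eq_eq_singleton]
      exact Real.volume_singleton
    have hcong : (∫ v in (0:ℝ)..1, (1 - v) ^ (2 * (0 : ℤ) - 2) * v ^ (2 * (ℓ : ℤ) - 2 * 0 + α)
          * ((ℓ : ℝ) * (1 - v) - (0 : ℝ)) ^ 2)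
        = ∫ v in (0:ℝ)..1, (ℓ:ℝ)^2 * v^n := by
      refine intervalIntegral.integral_congr_ae (hne.mono fun x hx _ => ?_)
      have h1x : (1:ℝ) - x ≠ 0 := sub_ne_zero.mpr (Ne.symm hx)
      rw [hnZ, zpow_natCast, show (2 * (0:ℤ) - 2) = -2 by ring, zpow_neg,
        show ((2:ℤ)) = ((2:ℕ) : ℤ) by norm_num, zpow_natCast]
      field_simp
      ring
    rw [hcong, intervalIntegral.integral_const_mul, integral_pow]
    have hcast : ((n:ℝ)) + 1 = 2 * (ℓ:ℝ) + (α:ℝ) + 1 := by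
      have : ((n:ℤ)) = 2 * (ℓ:ℤ) + α := by omega
      have h2 : ((n:ℝ)) = 2 * (ℓ:ℝ) + (α:ℝ) := by exact_mod_cast this
      linarith
    rw [show ((1:ℝ)^(n+1) - 0^(n+1)) = 1 by norm_num]
    rw [hcast]
    ring
  · -- Part 3
    have hd : (0:ℝ) < 2 * (ℓ:ℝ) + (α:ℝ) + 1 := by linarith
    rw [div_le_div_iff₀ hd (by norm_num : (0:ℝ) < 2)]
    nlinarith [mul_nonneg (by linarith : (0:ℝ) ≤ (ℓ:ℝ)) (by linarith : (0:ℝ) ≤ (α:ℝ) + 1)]
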